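/- Let 𝒮 be a circular split system on a finite set X with |X| ≥ 4, and let 𝒮' be a split system on X that is properly contained in 𝒮. Then 𝒮' is not injective. -/

import Mathlib

namespace InjectiveSplitSystems

open Finset

variable {α : Type*} [DecidableEq α]

/-- A split of `X`: an unordered bipartition of `X` into two nonempty disjoint parts,
represented as the two-element set `{A, B}` of its parts. -/
def IsSplit (X : Finset α) (S : Finset (Finset α)) : Prop :=
  ∃ A B : Finset α, S = {A, B} ∧ A ∪ B = X ∧ A ∩ B = ∅ ∧ A ≠ ∅ ∧ B ≠ ∅

/-- `S` is an `r`-split of `X`: a split of `X` whose minimum part size is `r`. -/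
def IsRSplit (X : Finset α) (r : ℕ) (S : Finset (Finset α)) : Prop :=
  IsSplit X S ∧ (∃ A ∈ S, A.card = r) ∧ ∀ A ∈ S, r ≤ A.card

/-- A split system on `X`: a set of splits of `X` containing all trivial splits
`{x} | X \ {x}`, `x ∈ X`. -/
def IsSplitSystem (X : Finset α) (𝒮 : Finset (Finset (Finset α))) : Prop :=
  (∀ S ∈ 𝒮, IsSplit X S) ∧ ∀ x ∈ X, ({{x}, X \ {x}} : Finset (Finset α)) ∈ 𝒮

/-- `phiNe Y Y' S` says `φ_Y(S) ≠ φ_{Y'}(S)`: the part of `S` containing at least two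
elements of the 3-set `Y` differs from the part of `S` containing at least two
elements of the 3-set `Y'`. -/
def phiNe (Y Y' : Finset α) (S : Finset (Finset α)) : Prop :=
  ∃ t ∈ S, ∃ t' ∈ S, t ≠ t' ∧ 2 ≤ (Y ∩ t).card ∧ 2 ≤ (Y' ∩ t').card

/-- A split system on `X` is injective if for all distinct 3-subsets `Y`, `Y'` of `X`
there is a split `S ∈ 𝒮` with `φ_Y(S) ≠ φ_{Y'}(S)`. -/
def IsInjective (X : Finset α) (𝒮 : Finset (Finset (Finset α))) : Prop :=
  ∀ Y Y' : Finset α, Y ⊆ X → Y' ⊆ X → Y.card = 3 → Y'.card = 3 → Y ≠ Y' →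
    ∃ S ∈ 𝒮, phiNe Y Y' S

/-- The restriction `S|_Y` of a split to `Y`, as the set of restricted parts. -/
def restrictSplit (S : Finset (Finset α)) (Y : Finset α) : Finset (Finset α) :=
  S.image (· ∩ Y)

open scoped Classical in
/-- The restriction `𝒮|_Y` of a split system to `Y`: all splits
`(A ∩ Y) | (B ∩ Y)` with `A|B ∈ 𝒮` and both intersections nonempty. -/
noncomputable def restrictSS (𝒮 : Finset (Finset (Finset α))) (Y : Finset α) :
    Finset (Finset (Finset α)) :=
  (𝒮.image fun S => restrictSplit S Y).filter fun T => ∀ t ∈ T, t ≠ ∅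

/-- `𝒮` 4-dices `X`. -/
def FourDices (X : Finset α) (𝒮 : Finset (Finset (Finset α))) : Prop :=
  X.card < 4 ∨ ∀ Y ⊆ X, Y.card = 4 →
    ∃ 𝒯 ⊆ restrictSS 𝒮 Y, 2 ≤ 𝒯.card ∧ ∀ S ∈ 𝒯, IsRSplit Y 2 S

/-- `𝒮` 5-dices `X`. -/
def FiveDices (X : Finset α) (𝒮 : Finset (Finset (Finset α))) : Prop :=
  X.card < 5 ∨ ∀ Y ⊆ X, Y.card = 5 →
    ∃ 𝒯 ⊆ restrictSS 𝒮 Y, 5 ≤ 𝒯.card ∧ ∀ S ∈ 𝒯, IsRSplit Y 2 S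

/-- `𝒮` 6-dices `X`: every 6-subset restriction contains a 3-split or a triangle
of 2-splits. -/
def SixDices (X : Finset α) (𝒮 : Finset (Finset (Finset α))) : Prop :=
  X.card < 6 ∨ ∀ Y ⊆ X, Y.card = 6 →
    (∃ S ∈ restrictSS 𝒮 Y, IsRSplit Y 3 S) ∨
    (∃ x ∈ Y, ∃ y ∈ Y, ∃ z ∈ Y, x ≠ y ∧ x ≠ z ∧ y ≠ z ∧
      ({{x, y}, Y \ {x, y}} : Finset (Finset α)) ∈ restrictSS 𝒮 Y ∧
      ({{x, z}, Y \ {x, z}} : Finset (Finset α)) ∈ restrictSS 𝒮 Y ∧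
      ({{y, z}, Y \ {y, z}} : Finset (Finset α)) ∈ restrictSS 𝒮 Y)

/-- Two splits are incompatible if they are distinct and all four pairwise
intersections of their parts are nonempty. -/
def Incompatible (S T : Finset (Finset α)) : Prop :=
  S ≠ T ∧ ∀ A ∈ S, ∀ B ∈ T, A ∩ B ≠ ∅

open scoped Classical in
/-- The dimension of a split system: maximum size of a pairwise incompatible subset
(which is `1` when all splits are pairwise compatible and `𝒮` is nonempty). -/
noncomputable def dimSS (𝒮 : Finset (Finset (Finset α))) : ℕ :=
  (𝒮.powerset.filter fun 𝒯 => ∀ S ∈ 𝒯, ∀ T ∈ 𝒯, S ≠ T → Incompatible S T).sup Finset.card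

/-- The injective dimension `ID(n)`: minimum dimension of an injective split system
on `{1, …, n}`. -/
noncomputable def ID (n : ℕ) : ℕ :=
  sInf {d : ℕ | ∃ 𝒮 : Finset (Finset (Finset ℕ)),
    IsSplitSystem (Finset.Icc 1 n) 𝒮 ∧ IsInjective (Finset.Icc 1 n) 𝒮 ∧ dimSS 𝒮 = d}

/-- The injective 2-split dimension `ID₂(n)`: minimum dimension of an injective split
system on `{1, …, n}` all of whose non-trivial splits have size 2. -/
noncomputable def ID2 (n : ℕ) : ℕ :=
  sInf {d : ℕ | ∃ 𝒮 : Finset (Finset (Finset ℕ)),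
    IsSplitSystem (Finset.Icc 1 n) 𝒮 ∧ IsInjective (Finset.Icc 1 n) 𝒮 ∧
    (∀ S ∈ 𝒮, IsRSplit (Finset.Icc 1 n) 1 S ∨ IsRSplit (Finset.Icc 1 n) 2 S) ∧
    dimSS 𝒮 = d}

/-- `𝒮` is rooted-injective relative to `r`. -/
def IsRootedInjective (X : Finset α) (r : α) (𝒮 : Finset (Finset (Finset α))) : Prop :=
  ∀ Z Z' : Finset α, Z ⊆ X \ {r} → Z' ⊆ X \ {r} → Z.card = 2 → Z'.card = 2 → Z ≠ Z' →
    ∃ S ∈ 𝒮, phiNe (insert r Z) (insert r Z') S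

/-- The rooted-injective dimension `ID^r(n)`: minimum dimension of a split system on an
`n`-element set that is rooted-injective relative to a given element. -/
noncomputable def IDr (n : ℕ) : ℕ :=
  sInf {d : ℕ | ∃ 𝒮 : Finset (Finset (Finset ℕ)),
    IsSplitSystem (Finset.Icc 1 n) 𝒮 ∧ IsRootedInjective (Finset.Icc 1 n) 1 𝒮 ∧
    dimSS 𝒮 = d}

/-- `𝒮` is circular: there is a labelling `x_1, …, x_n` of `X` such that every split
of `𝒮` has the form `{x_i, …, x_j} | complement`. -/
def IsCircular (X : Finset α) (𝒮 : Finset (Finset (Finset α))) : Prop :=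
  ∃ f : ℕ → α, Set.InjOn f ↑(Finset.Icc 1 X.card) ∧
    (Finset.Icc 1 X.card).image f = X ∧
    ∀ S ∈ 𝒮, ∃ i j : ℕ, 1 ≤ i ∧ i ≤ j ∧ j ≤ X.card ∧
      S = {(Finset.Icc i j).image f, X \ (Finset.Icc i j).image f}

/-- `𝒮` is maximal circular: circular and not properly contained in any circular
split system on `X`. -/
def IsMaximalCircular (X : Finset α) (𝒮 : Finset (Finset (Finset α))) : Prop :=
  IsCircular X 𝒮 ∧ ∀ 𝒮' : Finset (Finset (Finset α)),
    IsSplitSystem X 𝒮' → IsCircular X 𝒮' → 𝒮 ⊆ 𝒮' → 𝒮' = 𝒮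

/-- The degree of `x` in the graph `P(𝒮)` on vertex set `X` whose edges are the
pairs `{x, y}` with `xy | X − {x,y} ∈ 𝒮`. -/
def degP (X : Finset α) (𝒮 : Finset (Finset (Finset α))) (x : α) : ℕ :=
  ((X \ {x}).filter fun y => ({{x, y}, X \ {x, y}} : Finset (Finset α)) ∈ 𝒮).card

/-- `P(𝒮)` contains a 3-clique. -/
def HasTriangle (X : Finset α) (𝒮 : Finset (Finset (Finset α))) : Prop :=
  ∃ x ∈ X, ∃ y ∈ X, ∃ z ∈ X, x ≠ y ∧ x ≠ z ∧ y ≠ z ∧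
    ({{x, y}, X \ {x, y}} : Finset (Finset α)) ∈ 𝒮 ∧
    ({{x, z}, X \ {x, z}} : Finset (Finset α)) ∈ 𝒮 ∧
    ({{y, z}, X \ {y, z}} : Finset (Finset α)) ∈ 𝒮

/-- Conditions (B1) and (B2) for a map to be a vertex of the Buneman graph. -/
def IsBunemanVertex (𝒮 : Finset (Finset (Finset α))) (φ : {S // S ∈ 𝒮} → Finset α) : Prop :=
  (∀ S, φ S ∈ S.1) ∧ ∀ S S', S ≠ S' → (φ S ∩ φ S').Nonempty

/-- The vertex set of the Buneman graph `B(𝒮)`. -/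
abbrev BunemanVertex (𝒮 : Finset (Finset (Finset α))) : Type _ :=
  {φ : {S // S ∈ 𝒮} → Finset α // IsBunemanVertex 𝒮 φ}

/-- The Buneman graph `B(𝒮)`: two vertices are adjacent iff they differ on exactly
one split. -/
def BunemanGraph (𝒮 : Finset (Finset (Finset α))) : SimpleGraph (BunemanVertex 𝒮) where
  Adj φ ψ := ∃! S, φ.1 S ≠ ψ.1 S
  symm := by
    refine ⟨?_⟩
    rintro φ ψ ⟨S, hS, hU⟩
    exact ⟨S, hS.symm, fun T hT => hU T hT.symm⟩
  loopless := by
    refine ⟨?_⟩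
    rintro φ ⟨S, hS, -⟩
    exact hS rfl

/-- `m` is a median of `u`, `v`, `w` in the graph `G`. -/
def IsMedian {V : Type*} (G : SimpleGraph V) (u v w m : V) : Prop :=
  G.dist u m + G.dist m v = G.dist u v ∧
  G.dist v m + G.dist m w = G.dist v w ∧
  G.dist u m + G.dist m w = G.dist u w


private lemma two_of_three {a b c : α} {t : Finset α}
    (h : 2 ≤ (({a, b, c} : Finset α) ∩ t).card) :
    (a ∈ t ∧ b ∈ t) ∨ (a ∈ t ∧ c ∈ t) ∨ (b ∈ t ∧ c ∈ t) := by
  obtain ⟨x, hx, y, hy, hxy⟩ := Finset.one_lt_card.mp h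
  simp only [Finset.mem_inter, Finset.mem_insert, Finset.mem_singleton] at hx hy
  obtain ⟨hx1, hx2⟩ := hx
  obtain ⟨hy1, hy2⟩ := hy
  rcases hx1 with rfl | rfl | rfl <;> rcases hy1 with rfl | rfl | rfl <;> tauto

private lemma core_intervals {n i j i' j' k l : ℕ}
    (hn : 4 ≤ n) (h1i : 1 ≤ i) (hij : i < j) (hjn : j ≤ n)
    (hsz : 2 ≤ n - (j + 1 - i))
    (hi' : i' = if i = 1 then n else i - 1)
    (hj' : j' = if j = n then 1 else j + 1)
    (h1k : 1 ≤ k) (hkl : k ≤ l) (hln : l ≤ n)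
    (hxi : (k ≤ i' ∧ i' ≤ l) ↔ ¬(k ≤ i ∧ i ≤ l))
    (hxj : (k ≤ j ∧ j ≤ l) ↔ ¬(k ≤ j' ∧ j' ≤ l)) :
    (k = i ∧ l = j) ∨ (i = 1 ∧ k = j + 1 ∧ l = n) ∨ (j = n ∧ k = 1 ∧ l + 1 = i) := by
  split_ifs at hi' hj' <;> omega

/-- If `𝒮` is a circular split system on `X` (`|X| ≥ 4`) and `𝒮'` is
a split system on `X` properly contained in `𝒮`, then `𝒮'` is not injective. -/
theorem statement3 (X : Finset α) (hX : 4 ≤ X.card)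
    (𝒮 𝒮' : Finset (Finset (Finset α)))
    (h𝒮 : IsSplitSystem X 𝒮) (hcirc : IsCircular X 𝒮)
    (h𝒮' : IsSplitSystem X 𝒮') (hsub : 𝒮' ⊂ 𝒮) :
    ¬ IsInjective X 𝒮' := by
  intro hinj
  obtain ⟨f, hfinj, hfim, hint⟩ := hcirc
  set n := X.card with hn
  obtain ⟨S, hSmem, hSnot⟩ := Finset.exists_of_ssubset hsub
  obtain ⟨i, j, h1i, hij, hjn, hSrep⟩ := hint S hSmem
  -- basic membership facts
  have hfX : ∀ m, m ∈ Finset.Icc 1 n → f m ∈ X := by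
    intro m hm; rw [← hfim]; exact Finset.mem_image_of_mem f hm
  have hmem : ∀ u v : ℕ, 1 ≤ u → v ≤ n → ∀ m, m ∈ Finset.Icc 1 n →
      (f m ∈ (Finset.Icc u v).image f ↔ m ∈ Finset.Icc u v) := by
    intro u v hu hv m hm
    constructor
    · intro h
      obtain ⟨m', hm', he⟩ := Finset.mem_image.mp h
      have hm'2 : m' ∈ Finset.Icc 1 n := by
        rw [Finset.mem_Icc] at hm' ⊢; omega
      have := hfinj (Finset.mem_coe.mpr hm'2) (Finset.mem_coe.mpr hm) he
      rwa [← this]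
    · exact fun h => Finset.mem_image_of_mem f h
  have hfne : ∀ p q, p ∈ Finset.Icc 1 n → q ∈ Finset.Icc 1 n → p ≠ q → f p ≠ f q :=
    fun p q hp hq hpq he => hpq (hfinj (Finset.mem_coe.mpr hp) (Finset.mem_coe.mpr hq) he)
  have hAX : (Finset.Icc i j).image f ⊆ X := by
    rw [← hfim]
    exact Finset.image_subset_image (Finset.Icc_subset_Icc h1i hjn)
  have hcardA : ((Finset.Icc i j).image f).card = j + 1 - i := by
    rw [Finset.card_image_of_injOn (hfinj.mono (by
      exact_mod_cast Finset.coe_subset.mpr (Finset.Icc_subset_Icc h1i hjn)))]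
    exact Nat.card_Icc i j
  -- helper : an interval whose index set is the complement of [i,j] images to X \ A
  have himg : ∀ u v : ℕ, 1 ≤ u → v ≤ n →
      (∀ m, 1 ≤ m → m ≤ n → ((u ≤ m ∧ m ≤ v) ↔ ¬(i ≤ m ∧ m ≤ j))) →
      (Finset.Icc u v).image f = X \ (Finset.Icc i j).image f := by
    intro u v hu hv hiff
    ext x
    simp only [Finset.mem_sdiff]
    constructor
    · intro hx
      obtain ⟨m, hm, rfl⟩ := Finset.mem_image.mp hx
      rw [Finset.mem_Icc] at hm
      have hm1 : m ∈ Finset.Icc 1 n :=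
        Finset.mem_Icc.mpr ⟨le_trans hu hm.1, le_trans hm.2 hv⟩
      refine ⟨hfX m hm1, fun hmem' => ?_⟩
      have h2 := (hmem i j h1i hjn m hm1).mp hmem'
      rw [Finset.mem_Icc] at h2
      exact ((hiff m (le_trans hu hm.1) (le_trans hm.2 hv)).mp hm) h2
    · rintro ⟨hx1, hx2⟩
      rw [← hfim] at hx1
      obtain ⟨m, hm, rfl⟩ := Finset.mem_image.mp hx1
      rw [Finset.mem_Icc] at hm
      have hnin : ¬(i ≤ m ∧ m ≤ j) := fun h =>
        hx2 (Finset.mem_image_of_mem f (Finset.mem_Icc.mpr h))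
      have := (hiff m hm.1 hm.2).mpr hnin
      exact Finset.mem_image_of_mem f (Finset.mem_Icc.mpr this)
  -- S is nontrivial : both parts have at least 2 elements
  have hA2 : 2 ≤ ((Finset.Icc i j).image f).card := by
    by_contra h
    push_neg at h
    have hijeq : i = j := by omega
    have hAone : (Finset.Icc i j).image f = {f i} := by
      rw [hijeq, Finset.Icc_self, Finset.image_singleton]
    apply hSnot
    rw [hSrep, hAone]
    exact h𝒮'.2 (f i) (hfX i (Finset.mem_Icc.mpr ⟨h1i, by omega⟩))
  have hB2 : 2 ≤ (X \ (Finset.Icc i j).image f).card := by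
    by_contra h
    push_neg at h
    rcases Finset.eq_empty_or_nonempty (X \ (Finset.Icc i j).image f) with he | hne
    · -- then A = X and S contains ∅, contradicting IsSplit
      have hXA : X ⊆ (Finset.Icc i j).image f := fun x hx => by
        by_contra hc
        exact Finset.notMem_empty x (he ▸ Finset.mem_sdiff.mpr ⟨hx, hc⟩)
      obtain ⟨A', B', hS', hUn, hInt, hA'ne, hB'ne⟩ := h𝒮.1 S hSmem
      have hemem : (∅ : Finset α) ∈ S := by
        rw [hSrep, Finset.sdiff_eq_empty_iff_subset.mpr hXA]
        simp
      rw [hS'] at hemem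
      simp only [Finset.mem_insert, Finset.mem_singleton] at hemem
      rcases hemem with h | h
      · exact hA'ne h.symm
      · exact hB'ne h.symm
    · have hone : (X \ (Finset.Icc i j).image f).card = 1 := by
        have := Finset.card_pos.mpr hne; omega
      obtain ⟨x, hx⟩ := Finset.card_eq_one.mp hone
      have hxX : x ∈ X := (Finset.mem_sdiff.mp (hx ▸ Finset.mem_singleton_self x)).1
      have hArep : (Finset.Icc i j).image f = X \ {x} := by
        rw [← hx, Finset.sdiff_sdiff_eq_self hAX]
      apply hSnot
      rw [hSrep, hArep,
        Finset.sdiff_sdiff_eq_self (Finset.singleton_subset_iff.mpr hxX), Finset.pair_comm]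
      exact h𝒮'.2 x hxX
  have hijlt : i < j := by
    rw [hcardA] at hA2; omega
  have hszB : 2 ≤ n - (j + 1 - i) := by
    rw [Finset.card_sdiff_of_subset hAX, hcardA] at hB2
    exact hB2
  -- the four circularly consecutive boundary indices
  set i' := if i = 1 then n else i - 1 with hi'def
  set j' := if j = n then 1 else j + 1 with hj'def
  have hidx : 1 ≤ i' ∧ i' ≤ n ∧ 1 ≤ j' ∧ j' ≤ n ∧ i' ≠ i ∧ i' ≠ j ∧ i' ≠ j' ∧
      i ≠ j ∧ i ≠ j' ∧ j ≠ j' := by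
    rw [hi'def, hj'def]
    split_ifs <;> omega
  obtain ⟨h1i', hi'n, h1j', hj'n, hne1, hne2, hne3, hne4, hne5, hne6⟩ := hidx
  have hi'I : i' ∈ Finset.Icc 1 n := Finset.mem_Icc.mpr ⟨h1i', hi'n⟩
  have hiI : i ∈ Finset.Icc 1 n := Finset.mem_Icc.mpr ⟨h1i, le_trans (le_of_lt hijlt) hjn⟩
  have hjI : j ∈ Finset.Icc 1 n := Finset.mem_Icc.mpr ⟨by omega, hjn⟩
  have hj'I : j' ∈ Finset.Icc 1 n := Finset.mem_Icc.mpr ⟨h1j', hj'n⟩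
  -- the two triples
  have hYcard : ({f i', f i, f j} : Finset α).card = 3 :=
    Finset.card_eq_three.mpr ⟨f i', f i, f j, hfne _ _ hi'I hiI hne1,
      hfne _ _ hi'I hjI hne2, hfne _ _ hiI hjI hne4, rfl⟩
  have hY'card : ({f i', f i, f j'} : Finset α).card = 3 :=
    Finset.card_eq_three.mpr ⟨f i', f i, f j', hfne _ _ hi'I hiI hne1,
      hfne _ _ hi'I hj'I hne3, hfne _ _ hiI hj'I hne5, rfl⟩
  have hYsub : ({f i', f i, f j} : Finset α) ⊆ X := by
    intro x hx
    simp only [Finset.mem_insert, Finset.mem_singleton] at hx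
    rcases hx with rfl | rfl | rfl
    · exact hfX _ hi'I
    · exact hfX _ hiI
    · exact hfX _ hjI
  have hY'sub : ({f i', f i, f j'} : Finset α) ⊆ X := by
    intro x hx
    simp only [Finset.mem_insert, Finset.mem_singleton] at hx
    rcases hx with rfl | rfl | rfl
    · exact hfX _ hi'I
    · exact hfX _ hiI
    · exact hfX _ hj'I
  have hYne : ({f i', f i, f j} : Finset α) ≠ ({f i', f i, f j'} : Finset α) := by
    intro hEq
    have hd : f j' ∈ ({f i', f i, f j} : Finset α) := by
      rw [hEq]; simp
    simp only [Finset.mem_insert, Finset.mem_singleton] at hd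
    rcases hd with h | h | h
    · exact hfne _ _ hi'I hj'I hne3 h.symm
    · exact hfne _ _ hiI hj'I hne5 h.symm
    · exact hfne _ _ hjI hj'I hne6 h.symm
  obtain ⟨T, hT', hphi⟩ := hinj _ _ hYsub hY'sub hYcard hY'card hYne
  obtain ⟨k, l, h1k, hkl, hln, hTrep⟩ := hint T (hsub.1 hT')
  obtain ⟨t, ht, t', ht', htne, h2, h2'⟩ := hphi
  rw [hTrep] at ht ht'
  simp only [Finset.mem_insert, Finset.mem_singleton] at ht ht'
  have disj1 := two_of_three h2
  have disj2 := two_of_three h2'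
  have hdisj : ∀ x, x ∈ t → x ∉ t' := by
    rcases ht with rfl | rfl <;> rcases ht' with rfl | rfl
    · exact absurd rfl htne
    · intro x hx h; exact (Finset.mem_sdiff.mp h).2 hx
    · intro x hx h; exact (Finset.mem_sdiff.mp hx).2 h
    · exact absurd rfl htne
  have hmain : f j ∈ t ∧ f j' ∈ t' ∧ ((f i' ∈ t ∧ f i ∈ t') ∨ (f i ∈ t ∧ f i' ∈ t')) := by
    have ha := hdisj (f i')
    have hb := hdisj (f i)
    rcases disj1 with ⟨h1, h2⟩ | ⟨h1, h2⟩ | ⟨h1, h2⟩ <;>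
      rcases disj2 with ⟨h3, h4⟩ | ⟨h3, h4⟩ | ⟨h3, h4⟩
    · exact absurd h3 (ha h1)
    · exact absurd h3 (ha h1)
    · exact absurd h3 (hb h2)
    · exact absurd h3 (ha h1)
    · exact absurd h3 (ha h1)
    · exact ⟨h2, h4, Or.inl ⟨h1, h3⟩⟩
    · exact absurd h4 (hb h1)
    · exact ⟨h2, h4, Or.inr ⟨h1, h3⟩⟩
    · exact absurd h3 (hb h1)
  have hmC : ∀ m, m ∈ Finset.Icc 1 n → (f m ∈ (Finset.Icc k l).image f ↔ m ∈ Finset.Icc k l) :=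
    fun m hm => hmem k l h1k hln m hm
  have hmD : ∀ m, m ∈ Finset.Icc 1 n →
      (f m ∈ X \ (Finset.Icc k l).image f ↔ m ∉ Finset.Icc k l) := by
    intro m hm
    rw [Finset.mem_sdiff, ← hmC m hm]
    simp [hfX m hm]
  have hkey : ((i' ∈ Finset.Icc k l) ↔ ¬(i ∈ Finset.Icc k l)) ∧
      ((j ∈ Finset.Icc k l) ↔ ¬(j' ∈ Finset.Icc k l)) := by
    obtain ⟨hc, hd, hab⟩ := hmain
    rcases ht with rfl | rfl <;> rcases ht' with rfl | rfl
    · exact absurd rfl htne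
    · have h1 := (hmC j hjI).mp hc
      have h2 := (hmD j' hj'I).mp hd
      rcases hab with ⟨ha, hb⟩ | ⟨ha, hb⟩
      · have h3 := (hmC i' hi'I).mp ha
        have h4 := (hmD i hiI).mp hb
        exact ⟨iff_of_true h3 h4, iff_of_true h1 h2⟩
      · have h3 := (hmC i hiI).mp ha
        have h4 := (hmD i' hi'I).mp hb
        exact ⟨iff_of_false h4 (not_not_intro h3), iff_of_true h1 h2⟩
    · have h1 := (hmD j hjI).mp hc
      have h2 := (hmC j' hj'I).mp hd
      rcases hab with ⟨ha, hb⟩ | ⟨ha, hb⟩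
      · have h3 := (hmD i' hi'I).mp ha
        have h4 := (hmC i hiI).mp hb
        exact ⟨iff_of_false h3 (not_not_intro h4), iff_of_false h1 (not_not_intro h2)⟩
      · have h3 := (hmD i hiI).mp ha
        have h4 := (hmC i' hi'I).mp hb
        exact ⟨iff_of_true h4 h3, iff_of_false h1 (not_not_intro h2)⟩
    · exact absurd rfl htne
  obtain ⟨hxi, hxj⟩ := hkey
  simp only [Finset.mem_Icc] at hxi hxj
  have hconc := core_intervals (hn ▸ hX) h1i hijlt hjn hszB hi'def hj'def h1k hkl hln hxi hxj
  have hTS : T = S := by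
    rcases hconc with ⟨hk, hl⟩ | ⟨hieq, hk, hl⟩ | ⟨hjeq, hk, hl⟩
    · rw [hTrep, hSrep, hk, hl]
    · have hCA : (Finset.Icc k l).image f = X \ (Finset.Icc i j).image f := by
        apply himg k l h1k hln
        intro m h1m hmn
        omega
      rw [hTrep, hSrep, hCA, Finset.sdiff_sdiff_eq_self hAX, Finset.pair_comm]
    · have hCA : (Finset.Icc k l).image f = X \ (Finset.Icc i j).image f := by
        apply himg k l h1k hln
        intro m h1m hmn
        omega
      rw [hTrep, hSrep, hCA, Finset.sdiff_sdiff_eq_self hAX, Finset.pair_comm]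
  exact hSnot (hTS ▸ hT')

end InjectiveSplitSystems
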